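/- Let S be a finite non-commutative Clifford semigroup and suppose x₁, ..., xₙ ∈ S are non-central elements forming a path in the commuting graph of S (consecutive elements commute) with x₁ x_i = x_n x_i for all i ∈ {1,...,n}. Then x₁ = x_n. In other words, the commuting graph of a Clifford semigroup contains no left paths. -/

import Mathlib

/-- The commuting graph of a (non-commutative) semigroup: vertices are the
non-central elements, two distinct vertices are adjacent iff they commute. -/
def commGraph (S : Type*) [Mul S] : SimpleGraph {x : S // x ∉ Set.center S} where
  Adj a b := a ≠ b ∧ (a : S) * b = (b : S) * a
  symm := ⟨fun a b h => ⟨h.1.symm, h.2.symm⟩⟩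
  loopless := ⟨fun a h => h.1 rfl⟩

/-- A Clifford semigroup: a semigroup with a unary operation `⁻¹` such that
`(x⁻¹)⁻¹ = x`, `x * x⁻¹ * x = x`, `x⁻¹ * x = x * x⁻¹`, and all idempotents are central. -/
class CliffordSemigroup (S : Type*) extends Semigroup S, Inv S where
  inv_inv : ∀ x : S, x⁻¹⁻¹ = x
  mul_inv_mul : ∀ x : S, x * x⁻¹ * x = x
  inv_mul_comm : ∀ x : S, x⁻¹ * x = x * x⁻¹
  idem_central : ∀ e : S, e * e = e → ∀ y : S, e * y = y * e

namespace CliffordAux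

variable {S : Type*} [CliffordSemigroup S]

lemma inv_mul_inv (x : S) : x⁻¹ * x * x⁻¹ = x⁻¹ := by
  have h := CliffordSemigroup.mul_inv_mul (x := x⁻¹)
  rwa [CliffordSemigroup.inv_inv] at h

lemma e_idem (x : S) : (x * x⁻¹) * (x * x⁻¹) = x * x⁻¹ := by
  calc (x * x⁻¹) * (x * x⁻¹) = (x * x⁻¹ * x) * x⁻¹ := by simp [mul_assoc]
    _ = x * x⁻¹ := by rw [CliffordSemigroup.mul_inv_mul]

lemma e_central (x y : S) : (x * x⁻¹) * y = y * (x * x⁻¹) :=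
  CliffordSemigroup.idem_central _ (e_idem x) y

lemma mul_e (x : S) : x * (x * x⁻¹) = x := by
  rw [← e_central, CliffordSemigroup.mul_inv_mul]

lemma e2_central (x y z : S) : z * ((x * x⁻¹) * (y * y⁻¹)) = ((x * x⁻¹) * (y * y⁻¹)) * z := by
  rw [← mul_assoc, ← e_central x z, mul_assoc, ← e_central y z, ← mul_assoc]

lemma key (a b : S) (ha : a * a = b * a) (hb : a * b = b * b) : a = b := by
  set ea := a * a⁻¹ with hea
  set eb := b * b⁻¹ with heb
  have hae : a = b * ea := by
    calc a = a * ea := (mul_e a).symm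
      _ = a * (a * a⁻¹) := rfl
      _ = (a * a) * a⁻¹ := (mul_assoc a a a⁻¹).symm
      _ = (b * a) * a⁻¹ := by rw [ha]
      _ = b * ea := mul_assoc b a a⁻¹
  have hbe : b = a * eb := by
    calc b = b * eb := (mul_e b).symm
      _ = (b * b) * b⁻¹ := (mul_assoc b b b⁻¹).symm
      _ = (a * b) * b⁻¹ := by rw [hb]
      _ = a * eb := mul_assoc a b b⁻¹
  have hcomm : ea * eb = eb * ea := e_central a eb
  -- a = a * (eb * ea)
  have haf : a = a * (eb * ea) := by
    calc a = b * ea := hae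
      _ = (a * eb) * ea := by rw [← hbe]
      _ = a * (eb * ea) := mul_assoc a eb ea
  have hbf : b = b * (ea * eb) := by
    calc b = a * eb := hbe
      _ = (b * ea) * eb := by rw [← hae]
      _ = b * (ea * eb) := mul_assoc b ea eb
  -- ea * eb = ea
  have h1 : ea * eb = ea := by
    calc ea * eb = (ea * ea) * eb := by rw [e_idem]
      _ = ea * (ea * eb) := mul_assoc ea ea eb
      _ = ea * (eb * ea) := by rw [hcomm]
      _ = (a * a⁻¹) * (eb * ea) := rfl
      _ = a * (a⁻¹ * (eb * ea)) := mul_assoc _ _ _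
      _ = a * ((eb * ea) * a⁻¹) := by
            rw [show a⁻¹ * (eb * ea) = (eb * ea) * a⁻¹ by
              rw [hea, heb]; exact e2_central b a a⁻¹]
      _ = (a * (eb * ea)) * a⁻¹ := (mul_assoc _ _ _).symm
      _ = a * a⁻¹ := by rw [← haf]
      _ = ea := rfl
  have h2 : eb * ea = eb := by
    calc eb * ea = (eb * eb) * ea := by rw [e_idem]
      _ = eb * (eb * ea) := mul_assoc eb eb ea
      _ = eb * (ea * eb) := by rw [hcomm]
      _ = (b * b⁻¹) * (ea * eb) := rfl
      _ = b * (b⁻¹ * (ea * eb)) := mul_assoc _ _ _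
      _ = b * ((ea * eb) * b⁻¹) := by
            rw [show b⁻¹ * (ea * eb) = (ea * eb) * b⁻¹ by
              rw [hea, heb]; exact e2_central a b b⁻¹]
      _ = (b * (ea * eb)) * b⁻¹ := (mul_assoc _ _ _).symm
      _ = b * b⁻¹ := by rw [← hbf]
      _ = eb := rfl
  have heq : ea = eb := by rw [← h1, hcomm, h2]
  calc a = b * ea := hae
    _ = b * eb := by rw [heq]
    _ = b := mul_e b

end CliffordAux

theorem clifford_no_left_paths {S : Type*} [CliffordSemigroup S] [Fintype S]
    (hnc : ∃ a b : S, a * b ≠ b * a)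
    (n : ℕ) (x : Fin (n + 1) → S)
    -- the `x i` are vertices of the commuting graph
    (hvert : ∀ i, x i ∉ Set.center S)
    -- forming a path: consecutive vertices are distinct and commute
    (hadj : ∀ i : Fin n, x i.castSucc ≠ x i.succ ∧
        x i.castSucc * x i.succ = x i.succ * x i.castSucc)
    -- with the left-path condition
    (hleft : ∀ i, x 0 * x i = x (Fin.last n) * x i) :
    x 0 = x (Fin.last n) :=
  CliffordAux.key _ _ (hleft 0) (hleft (Fin.last n))
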